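/- Let B be a compact metric space and let C ⊆ B be a nonempty closed subset that contains at most one point of each connected component of B. Then C is a retract of B, i.e., there exists a continuous map r : B → C with r(c) = c for all c ∈ C. -/

import Mathlib

/-- A space has the fixed point property: every continuous self-map has a fixed point. -/
def HasFPP (Y : Type*) [TopologicalSpace Y] : Prop :=
  ∀ f : Y → Y, Continuous f → ∃ x, f x = x

/-- A space has the periodic point property: every continuous self-map has a periodic point. -/
def HasPPP (Y : Type*) [TopologicalSpace Y] : Prop :=
  ∀ f : Y → Y, Continuous f → ∃ x, ∃ n : ℕ, 1 ≤ n ∧ f^[n] x = x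

/-- Local fixed point property: there is an open basis whose members have closures with FPP. -/
def HasLFPP (Y : Type*) [TopologicalSpace Y] : Prop :=
  ∃ 𝓑 : Set (Set Y), TopologicalSpace.IsTopologicalBasis 𝓑 ∧
    ∀ B ∈ 𝓑, HasFPP ↥(closure B)

/-- Weak local fixed point property. -/
def HasWLFPP (Y : Type*) [TopologicalSpace Y] : Prop :=
  ∃ 𝓑 : Set (Set Y), TopologicalSpace.IsTopologicalBasis 𝓑 ∧
    ∀ B ∈ 𝓑, ∀ f : Y → Y, Continuous f → f '' closure B ⊆ B → ∃ x ∈ B, f x = x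

/-- Local periodic point property. -/
def HasLPPP (Y : Type*) [TopologicalSpace Y] : Prop :=
  ∃ 𝓑 : Set (Set Y), TopologicalSpace.IsTopologicalBasis 𝓑 ∧
    ∀ B ∈ 𝓑, HasPPP ↥(closure B)

/-- Weak local periodic point property. -/
def HasWLPPP (Y : Type*) [TopologicalSpace Y] : Prop :=
  ∃ 𝓑 : Set (Set Y), TopologicalSpace.IsTopologicalBasis 𝓑 ∧
    ∀ B ∈ 𝓑, ∀ f : Y → Y, Continuous f → f '' closure B ⊆ B →
      ∃ x ∈ B, ∃ n : ℕ, 1 ≤ n ∧ f^[n] x = x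

/-- A subset is a simple closed curve if it is homeomorphic to the unit circle. -/
def IsSimpleClosedCurve {α : Type*} [TopologicalSpace α] (S : Set α) : Prop :=
  Nonempty (↥S ≃ₜ ↥(Metric.sphere (0 : EuclideanSpace ℝ (Fin 2)) 1))

/-- Covering dimension at most `n`: every finite open cover admits an open shrinking
of order at most `n + 1`. -/
def CoveringDimLE (Y : Type*) [TopologicalSpace Y] (n : ℕ) : Prop :=
  ∀ (ι : Type) [Finite ι] (U : ι → Set Y), (∀ i, IsOpen (U i)) → (⋃ i, U i) = Set.univ →
    ∃ V : ι → Set Y, (∀ i, IsOpen (V i)) ∧ (∀ i, V i ⊆ U i) ∧ (⋃ i, V i) = Set.univ ∧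
      ∀ y : Y, {i | y ∈ V i}.ncard ≤ n + 1

/-- A dendrite: a locally connected (metric) continuum containing no simple closed curve. -/
def IsDendrite {α : Type*} [TopologicalSpace α] (D : Set α) : Prop :=
  IsCompact D ∧ IsConnected D ∧ LocallyConnectedSpace ↥D ∧ ∀ S ⊆ D, ¬ IsSimpleClosedCurve S

/-- A local dendrite: every point has a closed neighborhood which is a dendrite. -/
def IsLocalDendrite (Y : Type*) [TopologicalSpace Y] : Prop :=
  ∀ y : Y, ∃ N : Set Y, N ∈ nhds y ∧ IsClosed N ∧ IsDendrite N

open Metric Set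

/-- Invariant for our locally constant approximations. -/
def GoodAux {B : Type*} [MetricSpace B] (C : Set B) (ε : ℝ) (f : B → B) : Prop :=
  IsLocallyConstant f ∧ (∀ b, f b ∈ C) ∧ ∀ b, ∀ c ∈ C, f c = f b → dist c (f b) < ε

lemma L1_aux {B : Type*} [MetricSpace B] [CompactSpace B] (C : Set B) (hCcl : IsClosed C)
    (hone : ∀ x ∈ C, ∀ y ∈ C, y ∈ connectedComponent x → x = y)
    {c : B} (hc : c ∈ C) {η : ℝ} (hη : 0 < η) :
    ∃ U : Set B, IsClopen U ∧ c ∈ U ∧ ∀ x ∈ U ∩ C, dist x c < η := by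
  set K := C \ ball c η with hK
  have hKc : IsCompact (K : Set B) := (hCcl.sdiff isOpen_ball).isCompact
  have hKcover : K ⊆ ⋃ Z : {Z : Set B // IsClopen Z ∧ c ∈ Z}, (Z : Set B)ᶜ := by
    intro x hx
    by_contra h
    simp only [mem_iUnion, mem_compl_iff, not_exists, not_not] at h
    have hxc : x ∈ connectedComponent c := by
      rw [connectedComponent_eq_iInter_isClopen c]
      exact mem_iInter.mpr fun Z => h Z
    have : c = x := hone c hc x hx.1 hxc
    exact hx.2 (by simp [← this, hη])
  obtain ⟨s, hs⟩ := hKc.elim_finite_subcover _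
    (fun Z : {Z : Set B // IsClopen Z ∧ c ∈ Z} => Z.2.1.compl.isOpen) hKcover
  refine ⟨⋂ Z ∈ s, (Z : Set B), Finite.isClopen_biInter s.finite_toSet (fun Z _ => Z.2.1), ?_, ?_⟩
  · exact mem_iInter₂.mpr fun Z _ => Z.2.2
  · rintro x ⟨hxU, hxC⟩
    by_contra hlt
    have hxK : x ∈ K := ⟨hxC, fun hb => hlt (mem_ball.mp hb)⟩
    obtain ⟨Z, hZs, hZ⟩ := mem_iUnion₂.mp (hs hxK)
    exact hZ (mem_iInter₂.mp hxU Z hZs)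

lemma step_aux {B : Type*} [MetricSpace B] [CompactSpace B] (C : Set B) (hCcl : IsClosed C)
    (hCne : C.Nonempty)
    (hone : ∀ x ∈ C, ∀ y ∈ C, y ∈ connectedComponent x → x = y)
    {ε δ : ℝ} (hδ : 0 < δ) {f : B → B} (hf : GoodAux C ε f) :
    ∃ g : B → B, GoodAux C δ g ∧ ∀ b, dist (g b) (f b) ≤ ε := by
  classical
  obtain ⟨hlc, hmem, hstar⟩ := hf
  obtain ⟨c₀, hc₀⟩ := hCne
  have hε : 0 < ε := lt_of_le_of_lt dist_nonneg (hstar c₀ c₀ hc₀ rfl)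
  -- clopen neighborhoods around points of C
  have hU : ∀ c : C, ∃ U : Set B, IsClopen U ∧ (c : B) ∈ U ∧
      (∀ x ∈ U ∩ C, dist x (c : B) < δ / 2) ∧ ∀ x ∈ U, f x = f (c : B) := by
    intro c
    obtain ⟨U, hUcl, hcU, hUC⟩ := L1_aux C hCcl hone c.2 (half_pos hδ)
    refine ⟨U ∩ {x | f x = f (c : B)}, hUcl.inter (hlc.isClopen_fiber _), ⟨hcU, rfl⟩, ?_, ?_⟩
    · exact fun x hx => hUC x ⟨hx.1.1, hx.2⟩
    · exact fun x hx => hx.2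
  choose Uc hUcl hcU hUball hUfib using hU
  obtain ⟨t, ht⟩ := hCcl.isCompact.elim_finite_subcover Uc (fun c => (hUcl c).isOpen)
    (fun x hx => mem_iUnion.mpr ⟨⟨x, hx⟩, hcU ⟨x, hx⟩⟩)
  set n := t.card with hn
  set ec : Fin n → C := fun i => ((t.equivFin.symm i : t) : C) with hec
  set U' : Fin n → Set B := fun i => Uc (ec i) with hU'
  set cc : Fin n → B := fun i => ((ec i : C) : B) with hcc
  have hccC : ∀ i, cc i ∈ C := fun i => (ec i).2
  -- coverage of C
  have hCcov : ∀ c ∈ C, ∃ i, c ∈ U' i := by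
    intro c hc
    obtain ⟨z, hz, hcz⟩ := mem_iUnion₂.mp (ht hc)
    refine ⟨t.equivFin ⟨z, hz⟩, ?_⟩
    simp [hU', hec, Equiv.symm_apply_apply, hcz]
  -- disjointified pieces
  set V : Fin n → Set B := fun i => U' i \ ⋃ j : {j : Fin n // j < i}, U' j with hV
  have hVsub : ∀ i, V i ⊆ U' i := fun i x hx => hx.1
  have hVdisj : ∀ i j, ∀ b, b ∈ V i → b ∈ V j → i = j := by
    intro i j b hi hj
    rcases lt_trichotomy i j with h | h | h
    · exact absurd (mem_iUnion.mpr ⟨⟨i, h⟩, hi.1⟩) hj.2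
    · exact h
    · exact absurd (mem_iUnion.mpr ⟨⟨j, h⟩, hj.1⟩) (absurd · hi.2)
  have hVcov : ∀ b : B, (∃ i, b ∈ U' i) → ∃ i, b ∈ V i := by
    intro b hb
    obtain ⟨i, hi⟩ := hb
    set s : Finset (Fin n) := Finset.univ.filter (fun j => b ∈ U' j) with hsdef
    have hsne : s.Nonempty := ⟨i, by simp [hsdef, hi]⟩
    refine ⟨s.min' hsne, ?_, ?_⟩
    · have := s.min'_mem hsne
      simp [hsdef] at this
      exact this
    · intro hmem
      obtain ⟨⟨j, hji⟩, hbj⟩ := mem_iUnion.mp hmem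
      have hjs : j ∈ s := by simp [hsdef, hbj]
      exact absurd (s.min'_le j hjs) (not_le.mpr hji)
  -- value of each piece
  set val : Fin n → B := fun i =>
    if h : (V i ∩ C).Nonempty then h.choose else f (cc i) with hval
  set g : B → B := fun b => if h : ∃ i, b ∈ V i then val h.choose else f b with hg
  have hgV : ∀ i, ∀ b ∈ V i, g b = val i := by
    intro i b hb
    have hex : ∃ j, b ∈ V j := ⟨i, hb⟩
    have : hex.choose = i := hVdisj _ _ b hex.choose_spec hb
    simp only [hg, dif_pos hex, this]
  have hgW : ∀ b : B, (¬ ∃ i, b ∈ V i) → g b = f b := by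
    intro b hb; simp only [hg, dif_neg hb]
  have hvalC : ∀ i, val i ∈ C := by
    intro i
    by_cases h : (V i ∩ C).Nonempty
    · simp only [hval, dif_pos h]; exact h.choose_spec.2
    · simp only [hval, dif_neg h]; exact hmem _
  have hgC : ∀ b, g b ∈ C := by
    intro b
    by_cases h : ∃ i, b ∈ V i
    · obtain ⟨i, hi⟩ := h; rw [hgV i b hi]; exact hvalC i
    · rw [hgW b h]; exact hmem b
  -- local constancy of g
  have hglc : IsLocallyConstant g := by
    rw [IsLocallyConstant.iff_exists_open]
    intro x
    by_cases h : ∃ i, x ∈ V i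
    · obtain ⟨i, hi⟩ := h
      have hVopen : IsOpen (V i) :=
        (hUcl (ec i)).isOpen.sdiff (isClosed_iUnion_of_finite fun j => (hUcl (ec (j : Fin n))).isClosed)
      exact ⟨V i, hVopen, hi, fun y hy => by rw [hgV i y hy, hgV i x hi]⟩
    · obtain ⟨Of, hOfo, hxOf, hOf⟩ := (IsLocallyConstant.iff_exists_open f).mp hlc x
      have hxnU : ¬ ∃ i, x ∈ U' i := fun hc => h (hVcov x hc)
      refine ⟨Of ∩ (⋃ i, U' i)ᶜ,
        hOfo.inter (isClosed_iUnion_of_finite fun i => (hUcl (ec i)).isClosed).isOpen_compl,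
        ⟨hxOf, fun hc => hxnU (mem_iUnion.mp hc)⟩, ?_⟩
      intro y hy
      have hynV : ¬ ∃ i, y ∈ V i := by
        rintro ⟨i, hi⟩; exact hy.2 (mem_iUnion.mpr ⟨i, hVsub i hi⟩)
      rw [hgW y hynV, hgW x h, hOf y hy.1]
  refine ⟨g, ⟨hglc, hgC, ?_⟩, ?_⟩
  · -- the δ-property
    intro b c hcC hgceq
    obtain ⟨i, hi⟩ := hVcov c (hCcov c hcC)
    have hne : (V i ∩ C).Nonempty := ⟨c, hi, hcC⟩
    have hvi : val i ∈ V i ∩ C := by rw [hval]; simp only [dif_pos hne]; exact hne.choose_spec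
    have hgb : g b = val i := by rw [← hgceq, hgV i c hi]
    rw [hgb]
    have h1 : dist c (cc i) < δ / 2 := hUball (ec i) c ⟨hVsub i hi, hcC⟩
    have h2 : dist (val i) (cc i) < δ / 2 := hUball (ec i) (val i) ⟨hVsub i hvi.1, hvi.2⟩
    calc dist c (val i) ≤ dist c (cc i) + dist (val i) (cc i) := dist_triangle_right _ _ _
      _ < δ / 2 + δ / 2 := add_lt_add h1 h2
      _ = δ := add_halves δ
  · -- closeness to f
    intro b
    by_cases h : ∃ i, b ∈ V i
    · obtain ⟨i, hi⟩ := h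
      rw [hgV i b hi]
      have hfb : f b = f (cc i) := hUfib (ec i) b (hVsub i hi)
      by_cases hne : (V i ∩ C).Nonempty
      · have hvi : val i ∈ V i ∩ C := by rw [hval]; simp only [dif_pos hne]; exact hne.choose_spec
        have hfv : f (val i) = f b := by
          rw [hUfib (ec i) (val i) (hVsub i hvi.1), hfb]
        exact (hstar b (val i) hvi.2 hfv).le
      · rw [hval]; simp only [dif_neg hne]
        rw [← hfb, dist_self]; exact hε.le
    · rw [hgW b h, dist_self]; exact hε.le

/-- A nonempty closed subset of a compact metric space meeting each connected component in
at most one point is a retract. -/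
theorem stmt_18 {B : Type*} [MetricSpace B] [CompactSpace B]
    (C : Set B) (hCne : C.Nonempty) (hCcl : IsClosed C)
    (hone : ∀ x ∈ C, ∀ y ∈ C, y ∈ connectedComponent x → x = y) :
    ∃ r : B → B, Continuous r ∧ (∀ x, r x ∈ C) ∧ ∀ c ∈ C, r c = c := by
  classical
  obtain ⟨c₀, hc₀⟩ := hCne
  set ε₀ : ℝ := diam (univ : Set B) + 1 with hε₀def
  have hε₀ : 0 < ε₀ := by positivity
  have hbase : GoodAux C ε₀ (fun _ => c₀) := by
    refine ⟨IsLocallyConstant.const c₀, fun _ => hc₀, fun b c hc _ => ?_⟩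
    calc dist c c₀ ≤ diam (univ : Set B) :=
          dist_le_diam_of_mem isCompact_univ.isBounded (mem_univ _) (mem_univ _)
      _ < ε₀ := by simp [hε₀def]
  have hstep : ∀ n : ℕ, ∀ f : B → B, GoodAux C (ε₀ * (1/2) ^ n) f →
      ∃ g : B → B, GoodAux C (ε₀ * (1/2) ^ (n+1)) g ∧ ∀ b, dist (g b) (f b) ≤ ε₀ * (1/2) ^ n :=
    fun n f hf => step_aux C hCcl ⟨c₀, hc₀⟩ hone (by positivity) hf
  choose G hG hGd using hstep
  let F : ∀ n : ℕ, {f : B → B // GoodAux C (ε₀ * (1/2) ^ n) f} := fun n =>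
    Nat.rec ⟨fun _ => c₀, by simpa using hbase⟩ (fun k fk => ⟨G k fk.1 fk.2, hG k fk.1 fk.2⟩) n
  have hFd : ∀ n b, dist ((F (n+1)).1 b) ((F n).1 b) ≤ ε₀ * (1/2) ^ n :=
    fun n b => hGd n (F n).1 (F n).2 b
  have hcauchy : ∀ b : B, CauchySeq (fun n => (F n).1 b) := by
    intro b
    refine cauchySeq_of_le_geometric (1/2) ε₀ (by norm_num) (fun n => ?_)
    rw [dist_comm]; exact hFd n b
  choose r hr using fun b => cauchySeq_tendsto_of_complete (hcauchy b)
  have hdistr : ∀ n b, dist ((F n).1 b) (r b) ≤ ε₀ * (1/2) ^ n / (1 - 1/2) := by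
    intro n b
    exact dist_le_of_le_geometric_of_tendsto (1/2) ε₀ (by norm_num)
      (fun k => by rw [dist_comm]; exact hFd k b) (hr b) n
  have htu : TendstoUniformly (fun n b => (F n).1 b) r Filter.atTop := by
    rw [Metric.tendstoUniformly_iff]
    intro η hη
    have hlim : Filter.Tendsto (fun n : ℕ => ε₀ * (1/2) ^ n / (1 - 1/2)) Filter.atTop (nhds 0) := by
      have := tendsto_pow_atTop_nhds_zero_of_lt_one (by norm_num : (0:ℝ) ≤ 1/2) (by norm_num)
      simpa using (this.const_mul ε₀).div_const (1 - 1/2)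
    filter_upwards [hlim.eventually_lt_const hη] with n hn b
    rw [dist_comm]
    exact lt_of_le_of_lt (hdistr n b) hn
  refine ⟨r, htu.continuous (Filter.Eventually.of_forall (f := Filter.atTop) fun n => (F n).2.1.continuous).frequently, ?_, ?_⟩
  · intro b
    exact hCcl.mem_of_tendsto (hr b) (Filter.Eventually.of_forall fun n => (F n).2.2.1 b)
  · intro c hc
    have h1 : ∀ n, dist ((F n).1 c) c ≤ ε₀ * (1/2) ^ n := by
      intro n
      rw [dist_comm]
      exact ((F n).2.2.2 c c hc rfl).le
    have h2 : Filter.Tendsto (fun n => (F n).1 c) Filter.atTop (nhds c) := by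
      rw [tendsto_iff_dist_tendsto_zero]
      refine squeeze_zero (fun n => dist_nonneg) h1 ?_
      have := tendsto_pow_atTop_nhds_zero_of_lt_one (by norm_num : (0:ℝ) ≤ 1/2) (by norm_num)
      simpa using this.const_mul ε₀
    exact tendsto_nhds_unique (hr c) h2
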